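/- For the modified ceiling quotas: for every ℓ ∈ {2,…,K}, every S ⊆ {1,…,K} with |S| = ℓ, and every k ∈ S, one has q̄'_S ≥ q̲_k + q̄'_{S∖{k}}. -/
import Mathlib


open Finset

theorem statement9 (K : ℕ) (N : ℤ) (qlow qhigh : Fin K → ℤ)
    (hql : ∀ k, 0 ≤ qlow k) (hquo : ∀ k, qlow k ≤ qhigh k)
    (hN : ∑ k, qlow k ≤ N)
    (q' : Finset (Fin K) → ℤ)
    (hsingle : ∀ k, q' {k} = min (qhigh k) (N - ∑ k' ∈ univ.erase k, qlow k'))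
    (hrec : ∀ S : Finset (Fin K), ∀ hS : 2 ≤ S.card,
      q' S = min (S.inf' (Finset.card_pos.mp (by omega)) fun k => q' (S.erase k) + q' {k})
        (N - ∑ k' ∈ Sᶜ, qlow k')) :
    ∀ S : Finset (Fin K), 2 ≤ S.card → ∀ k ∈ S,
      qlow k + q' (S.erase k) ≤ q' S := by
  have hub : ∀ S : Finset (Fin K), S.Nonempty → q' S ≤ N - ∑ k' ∈ Sᶜ, qlow k' := by
    intro S hS
    rcases eq_or_lt_of_le (Finset.one_le_card.mpr hS) with h1 | h2
    · obtain ⟨k, rfl⟩ := Finset.card_eq_one.mp h1.symm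
      rw [hsingle]
      have hc : ({k} : Finset (Fin K))ᶜ = univ.erase k := by
        ext x; simp [eq_comm]
      rw [hc]; exact min_le_right _ _
    · rw [hrec S h2]; exact min_le_right _ _
  have hlow : ∀ k, qlow k ≤ q' {k} := by
    intro k
    rw [hsingle]
    refine le_min (hquo k) ?_
    have h := hN
    rw [← Finset.sum_erase_add univ qlow (mem_univ k)] at h
    omega
  have hsub : ∀ S : Finset (Fin K), 2 ≤ S.card → ∀ j ∈ S, q' S ≤ q' (S.erase j) + q' {j} := by
    intro S hS j hj
    rw [hrec S hS]
    exact le_trans (min_le_left _ _) (Finset.inf'_le _ hj)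
  intro S
  induction S using Finset.strongInductionOn with
  | _ S ih =>
    intro hS k hk
    rw [hrec S hS]
    refine le_min ?_ ?_
    · rw [Finset.le_inf'_iff]
      intro j hj
      by_cases hjk : j = k
      · subst hjk
        have := hlow j
        omega
      · rcases eq_or_lt_of_le hS with h2 | h3
        · have he1 : (S.erase j).card = 1 := by
            rw [Finset.card_erase_of_mem hj]; omega
          have he2 : (S.erase k).card = 1 := by
            rw [Finset.card_erase_of_mem hk]; omega
          obtain ⟨x, hx⟩ := Finset.card_eq_one.mp he1
          obtain ⟨y, hy⟩ := Finset.card_eq_one.mp he2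
          have hkx : k = x := by
            have : k ∈ S.erase j := Finset.mem_erase.mpr ⟨Ne.symm hjk, hk⟩
            rw [hx] at this; simpa using this
          have hjy : j = y := by
            have : j ∈ S.erase k := Finset.mem_erase.mpr ⟨hjk, hj⟩
            rw [hy] at this; simpa using this
          rw [hx, hy, ← hkx, ← hjy]
          have := hlow k
          omega
        · have hk' : k ∈ S.erase j := Finset.mem_erase.mpr ⟨Ne.symm hjk, hk⟩
          have hcard : 2 ≤ (S.erase j).card := by
            rw [Finset.card_erase_of_mem hj]; omega
          have h1 := ih (S.erase j) (Finset.erase_ssubset hj) hcard k hk'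
          have h2 := hsub (S.erase k)
            (by rw [Finset.card_erase_of_mem hk]; omega) j
            (Finset.mem_erase.mpr ⟨hjk, hj⟩)
          rw [Finset.erase_right_comm] at h2
          omega
    · have hne : (S.erase k).Nonempty := by
        rw [← Finset.card_pos, Finset.card_erase_of_mem hk]; omega
      have h1 := hub (S.erase k) hne
      rw [Finset.compl_erase, Finset.sum_insert (by simp [hk])] at h1
      omega
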